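/- For every t ∈ ℝ and j ≥ 1, the j-th Hermite coefficient of the indicator function ω ↦ χ(ω > t) equals φ(t)·H_{j−1}(t), and the 0-th coefficient equals 1 − Φ(t). That is, ∫_ℝ χ(ω > t)·H_j(ω)·φ(ω) dω = φ(t)·H_{j−1}(t) for j ≥ 1. -/

import Mathlib

open MeasureTheory Polynomial

noncomputable def gaussPDF (x : ℝ) : ℝ :=
  (Real.sqrt (2 * Real.pi))⁻¹ * Real.exp (-x ^ 2 / 2)

noncomputable def stdCDF (t : ℝ) : ℝ := ∫ w in Set.Iic t, gaussPDF w

lemma aeval_eq_eval' (p : ℤ[X]) (x : ℝ) :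
    aeval x p = (p.map (Int.castRingHom ℝ)).eval x := by
  rw [Polynomial.aeval_def, Polynomial.eval₂_eq_eval_map, algebraMap_int_eq]

lemma poly_gauss_tendsto (p : ℝ[X]) (a : ℝ) :
    Filter.Tendsto (fun x => p.eval x * Real.exp (a * x - x ^ 2 / 2))
      Filter.atTop (nhds 0) := by
  have hg : Filter.Tendsto (fun x => |p.eval x| * Real.exp (-x)) Filter.atTop (nhds 0) := by
    have h := (p.tendsto_div_exp_atTop).abs
    rw [abs_zero] at h
    refine h.congr fun x => ?_
    rw [abs_div, Real.abs_exp, Real.exp_neg, div_eq_mul_inv]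
  refine squeeze_zero_norm' ?_ hg
  filter_upwards [Filter.eventually_ge_atTop (max 1 (2 * (a + 1)))] with x hx
  have hx1 : (1 : ℝ) ≤ x := le_trans (le_max_left _ _) hx
  have hx2 : 2 * (a + 1) ≤ x := le_trans (le_max_right _ _) hx
  have hexp : a * x - x ^ 2 / 2 ≤ -x := by
    nlinarith [mul_nonneg (by linarith : (0:ℝ) ≤ x - 2 * (a + 1)) (by linarith : (0:ℝ) ≤ x)]
  rw [Real.norm_eq_abs, abs_mul, Real.abs_exp]
  exact mul_le_mul_of_nonneg_left (Real.exp_le_exp.2 hexp) (abs_nonneg _)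

lemma continuous_gaussPDF : Continuous gaussPDF := by
  unfold gaussPDF
  fun_prop

lemma hasDerivAt_hermite_gauss (k : ℕ) (x : ℝ) :
    HasDerivAt (fun w => (aeval w (hermite k)) * gaussPDF w)
      (-((aeval x (hermite (k + 1))) * gaussPDF x)) x := by
  have hP : HasDerivAt (fun w : ℝ => aeval w (hermite k))
      (aeval x (derivative (hermite k))) x := (hermite k).hasDerivAt_aeval x
  have h1 : HasDerivAt (fun w : ℝ => -w ^ 2 / 2) (-(2 * x ^ 1) / 2) x :=
    ((hasDerivAt_pow 2 x).neg).div_const 2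
  have h2 := h1.exp
  have hg : HasDerivAt gaussPDF (-x * gaussPDF x) x := by
    have h3 := h2.const_mul (Real.sqrt (2 * Real.pi))⁻¹
    convert h3 using 1
    · rfl
    · rfl
    · rfl
    simp only [gaussPDF]
    ring
  have := hP.mul hg
  convert this using 1
  · rfl
  · rfl
  · rfl
  rw [hermite_succ, map_sub, map_mul, aeval_X]
  ring

lemma tendsto_hermite_gauss (k : ℕ) :
    Filter.Tendsto (fun w => (aeval w (hermite k)) * gaussPDF w) Filter.atTop (nhds 0) := by
  have h := (poly_gauss_tendsto ((hermite k).map (Int.castRingHom ℝ)) 0).const_mul (Real.sqrt (2 * Real.pi))⁻¹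
  rw [mul_zero] at h
  refine h.congr fun x => ?_
  rw [aeval_eq_eval']
  simp only [gaussPDF, zero_mul, zero_sub, neg_div]
  ring

lemma integrableOn_hermite_gauss (k : ℕ) (t : ℝ) :
    IntegrableOn (fun w => (aeval w (hermite k)) * gaussPDF w) (Set.Ioi t) := by
  refine integrable_of_isBigO_exp_neg (b := 1) one_pos ?_ ?_
  · exact ((Polynomial.continuous_aeval (hermite k)).mul continuous_gaussPDF).continuousOn
  · refine Asymptotics.IsLittleO.isBigO ?_
    rw [Asymptotics.isLittleO_iff_tendsto fun x h =>
      absurd h (Real.exp_ne_zero _)]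
    have h := (poly_gauss_tendsto ((hermite k).map (Int.castRingHom ℝ)) 1).const_mul (Real.sqrt (2 * Real.pi))⁻¹
    rw [mul_zero] at h
    refine h.congr fun x => ?_
    rw [aeval_eq_eval', eq_div_iff (Real.exp_ne_zero _)]
    simp only [gaussPDF]
    have hx : Real.exp (1 * x - x ^ 2 / 2) * Real.exp (-1 * x) = Real.exp (-x ^ 2 / 2) := by
      rw [← Real.exp_add]; congr 1; ring
    linear_combination ((Real.sqrt (2 * Real.pi))⁻¹ *
      eval x (map (Int.castRingHom ℝ) (hermite k))) * hx

lemma integrable_gaussPDF : Integrable gaussPDF := by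
  have h := (integrable_exp_neg_mul_sq (show (0:ℝ) < 1/2 by norm_num)).const_mul
    (Real.sqrt (2 * Real.pi))⁻¹
  refine h.congr (Filter.Eventually.of_forall fun x => ?_)
  simp only [gaussPDF]
  congr 1
  ring

lemma integral_gaussPDF : (∫ x, gaussPDF x) = 1 := by
  have h : (∫ x, gaussPDF x) = (Real.sqrt (2 * Real.pi))⁻¹ * ∫ x, Real.exp (-(1/2) * x ^ 2) := by
    rw [← MeasureTheory.integral_const_mul]
    congr 1
    funext x
    simp only [gaussPDF]
    congr 1
    ring
  rw [h, integral_gaussian, show Real.pi / (1/2) = 2 * Real.pi by ring]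
  exact inv_mul_cancel₀ (Real.sqrt_ne_zero'.2 (by positivity))

theorem hermite_coeff_indicator (t : ℝ) :
    (∫ w in Set.Ioi t, gaussPDF w) = 1 - stdCDF t ∧
    ∀ j : ℕ, 1 ≤ j →
      (∫ w in Set.Ioi t, (aeval w (hermite j)) * gaussPDF w) =
        gaussPDF t * aeval t (hermite (j - 1)) := by
  constructor
  · have h := intervalIntegral.integral_Iic_add_Ioi (b := t) (f := gaussPDF)
      integrable_gaussPDF.integrableOn integrable_gaussPDF.integrableOn
    rw [integral_gaussPDF] at h
    simp only [stdCDF]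
    linarith
  · intro j hj
    obtain ⟨k, rfl⟩ : ∃ k, j = k + 1 := ⟨j - 1, (Nat.succ_pred_eq_of_pos hj).symm⟩
    simp only [Nat.add_sub_cancel]
    have key := integral_Ioi_of_hasDerivAt_of_tendsto
      (f := fun w => (aeval w (hermite k)) * gaussPDF w)
      (f' := fun w => -((aeval w (hermite (k + 1))) * gaussPDF w)) (a := t) (m := 0)
      (((Polynomial.continuous_aeval (hermite k)).mul
        continuous_gaussPDF).continuousWithinAt)
      (fun x _ => hasDerivAt_hermite_gauss k x)
      ((integrableOn_hermite_gauss (k + 1) t).neg)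
      (tendsto_hermite_gauss k)
    rw [MeasureTheory.integral_neg] at key
    have := neg_eq_iff_eq_neg.mp key
    rw [this]
    ring
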